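/- (Acyclicity Lemma of Peskine–Szpiro) Let A be a Noetherian local ring and 0 → Λ⁰ → Λ¹ → ⋯ → Λᵗ a complex of finitely generated A-modules with pd_A(Λⁱ) ≤ i for all i, such that every nonvanishing cohomology module Hⁱ of the complex with i < t has depth zero. If t ≤ depth(A), then Hⁱ = 0 for all i < t, i.e. the complex is a resolution of its terminal cohomology. -/

import Mathlib

set_option linter.unusedSectionVars false
universe u

/-- `PdLE R i M`: `M` has projective dimension at most `i` over `R`, encoded
recursively: `pd ≤ 0` means projective, and `pd ≤ i+1` means `M` is a quotient of a
finite free module whose kernel has `pd ≤ i`. -/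
def PdLE (R : Type u) [CommRing R] :
    ℕ → ∀ (M : Type u) [AddCommGroup M] [Module R M], Prop
  | 0 => fun M _ _ => Module.Projective R M
  | (i + 1) => fun M _ _ => ∃ (m : ℕ) (φ : (Fin m → R) →ₗ[R] M),
      Function.Surjective φ ∧ PdLE R i ↥(LinearMap.ker φ)


open IsLocalRing RingTheory.Sequence
open scoped Pointwise TensorProduct

section AuxA
variable {A : Type u} [CommRing A]

lemma memSmulTop {M : Type u} [AddCommGroup M] [Module A M] (r : A) (m : M) :
    m ∈ (r • ⊤ : Submodule A M) ↔ ∃ n : M, r • n = m := by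
  constructor
  · intro h
    rw [← SetLike.mem_coe, Submodule.coe_pointwise_smul] at h
    obtain ⟨n, -, hn⟩ := Set.mem_smul_set.mp h
    exact ⟨n, hn⟩
  · rintro ⟨n, rfl⟩
    exact Submodule.smul_mem_pointwise_smul n r ⊤ Submodule.mem_top

lemma annSpanMem {M : Type u} [AddCommGroup M] [Module A M] {m : M} {b : A} :
    b ∈ (A ∙ m).annihilator ↔ b • m = 0 := Submodule.mem_annihilator_span_singleton m b

lemma colonMem {M : Type u} [AddCommGroup M] [Module A M] {m : M} {b : A} :
    b ∈ (⊥ : Submodule A M).colon {m} ↔ b • m = 0 := by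
  rw [Submodule.mem_colon_singleton, Submodule.mem_bot]

lemma colonEqAnn {M : Type u} [AddCommGroup M] [Module A M] (m : M) :
    (⊥ : Submodule A M).colon {m} = (A ∙ m).annihilator := by
  ext b; rw [colonMem, annSpanMem]

lemma ass_sub_union [IsNoetherianRing A] {X : Type u} [AddCommGroup X] [Module A X] (N : Submodule A X) :
    associatedPrimes A X ⊆ associatedPrimes A ↥N ∪ associatedPrimes A (X ⧸ N) := by
  intro p hp0
  obtain ⟨hp, x, hx⟩ := isAssociatedPrime_iff.mp hp0
  have hpx : ∀ c : A, c ∈ p ↔ c • x = 0 := fun c => by rw [hx]; exact colonMem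
  by_cases hc : ∃ a : A, a • x ∈ N ∧ a • x ≠ 0
  · obtain ⟨a, haN, ha0⟩ := hc
    have hap : a ∉ p := fun h => ha0 ((hpx a).mp h)
    left
    refine isAssociatedPrime_iff.mpr ⟨hp, ⟨a • x, haN⟩, ?_⟩
    ext b
    rw [hpx, colonMem]
    constructor
    · intro hb
      apply Subtype.ext
      show b • (a • x) = 0
      rw [smul_comm, hb, smul_zero]
    · intro hb
      have hb' : (a * b) • x = 0 := by
        have h2 : b • (a • x) = 0 := congrArg Subtype.val hb
        rw [mul_smul, smul_comm]; exact h2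
      rcases hp.mul_mem_iff_mem_or_mem.mp ((hpx (a * b)).mpr hb') with h | h
      · exact absurd h hap
      · exact (hpx b).mp h
  · push_neg at hc
    right
    refine isAssociatedPrime_iff.mpr ⟨hp, N.mkQ x, ?_⟩
    ext b
    rw [hpx, colonMem, ← map_smul, Submodule.mkQ_apply, Submodule.Quotient.mk_eq_zero]
    constructor
    · intro hb
      rw [hb]; exact N.zero_mem
    · exact hc b

lemma ass_span_singleton_sub [IsNoetherianRing A] {X : Type u} [AddCommGroup X] [Module A X] (x : X)
    (hp : ((A ∙ x).annihilator).IsPrime) :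
    associatedPrimes A ↥(A ∙ x) ⊆ {(A ∙ x).annihilator} := by
  intro q hq0
  obtain ⟨hq, y, hy⟩ := isAssociatedPrime_iff.mp hq0
  obtain ⟨a, ha⟩ := Submodule.mem_span_singleton.mp y.2
  have hqy : ∀ c : A, c ∈ q ↔ c • y = 0 := fun c => by rw [hy]; exact colonMem
  have hy0 : (y : X) ≠ 0 := by
    intro h
    apply hq.ne_top
    rw [Ideal.eq_top_iff_one, hqy]
    apply Subtype.ext
    show (1 : A) • (y : X) = 0
    rw [h, smul_zero]
  have hanp : a ∉ (A ∙ x).annihilator := fun h => hy0 (by rw [← ha]; exact annSpanMem.mp h)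
  show q = _
  ext b
  rw [hqy, annSpanMem]
  constructor
  · intro hb
    have hb' : b • (y : X) = 0 := congrArg Subtype.val hb
    rw [← ha, smul_comm, ← mul_smul] at hb'
    rcases hp.mul_mem_iff_mem_or_mem.mp (annSpanMem.mpr hb') with h | h
    · exact absurd h hanp
    · exact annSpanMem.mp h
  · intro hb
    apply Subtype.ext
    show b • (y : X) = 0
    rw [← ha, smul_comm, hb, smul_zero]

end AuxA

section AuxB
variable {A : Type u} [CommRing A] [IsLocalRing A] [IsNoetherianRing A]

lemma ass_finite (M : Type u) [AddCommGroup M] [Module A M] [Module.Finite A M] :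
    (associatedPrimes A M).Finite := by
  haveI : IsNoetherian A M := isNoetherian_of_isNoetherianRing_of_finite A M
  suffices h : ∀ N : Submodule A M, (associatedPrimes A (M ⧸ N)).Finite by
    have h0 := h ⊥
    rwa [LinearEquiv.AssociatedPrimes.eq (Submodule.quotEquivOfEqBot ⊥ rfl)] at h0
  intro N
  induction N using IsNoetherian.induction with
  | _ N IH =>
    by_cases hs : Subsingleton (M ⧸ N)
    · rw [associatedPrimes.eq_empty_of_subsingleton]
      exact Set.finite_empty
    rw [not_subsingleton_iff_nontrivial] at hs
    obtain ⟨p, hp⟩ := associatedPrimes.nonempty A (M ⧸ N)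
    obtain ⟨hpp, x, hx⟩ := isAssociatedPrime_iff.mp hp
    have hx0 : x ≠ 0 := by
      rintro rfl
      apply hpp.ne_top
      rw [hx, Ideal.eq_top_iff_one, colonMem, smul_zero]
    obtain ⟨m, rfl⟩ := N.mkQ_surjective x
    have hmN : m ∉ N := by
      intro h
      exact hx0 ((Submodule.Quotient.mk_eq_zero N).mpr h)
    have hNJ : N < N ⊔ A ∙ m := by
      refine lt_of_le_of_ne le_sup_left ?_
      intro h
      exact hmN (h ▸ (le_sup_right (a := N) : (A ∙ m) ≤ N ⊔ A ∙ m) (Submodule.mem_span_singleton_self m))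
    have hmap : (A ∙ (N.mkQ m)) = (N ⊔ A ∙ m).map N.mkQ := by
      rw [Submodule.map_sup, Submodule.map_span, Set.image_singleton,
        Submodule.mkQ_map_self, bot_sup_eq]
    have hsub := ass_sub_union (A := A) (X := M ⧸ N) (A ∙ (N.mkQ m))
    have h1 : associatedPrimes A ↥(A ∙ (N.mkQ m)) ⊆ {p} := by
      rw [hx, colonEqAnn]
      exact ass_span_singleton_sub _ (by rw [← colonEqAnn, ← hx]; exact hpp)
    have e2 : ((M ⧸ N) ⧸ (A ∙ (N.mkQ m))) ≃ₗ[A] (M ⧸ (N ⊔ A ∙ m)) :=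
      (Submodule.quotEquivOfEq _ _ hmap).trans
        (Submodule.quotientQuotientEquivQuotient N (N ⊔ A ∙ m) le_sup_left)
    have h2 : associatedPrimes A ((M ⧸ N) ⧸ (A ∙ (N.mkQ m)))
        = associatedPrimes A (M ⧸ (N ⊔ A ∙ m)) := LinearEquiv.AssociatedPrimes.eq e2
    refine Set.Finite.subset ?_ hsub
    refine Set.Finite.union (Set.Finite.subset (Set.finite_singleton p) h1) ?_
    rw [h2]
    exact IH _ hNJ

lemma exists_reg_or_tors (M : Type u) [AddCommGroup M] [Module A M] [Module.Finite A M] :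
    (∃ x ∈ maximalIdeal A, IsSMulRegular M x) ∨
      ∃ m : M, m ≠ 0 ∧ ∀ r ∈ maximalIdeal A, r • m = 0 := by
  by_cases hreg : ∃ x ∈ maximalIdeal A, IsSMulRegular M x
  · exact Or.inl hreg
  by_cases hs : Subsingleton M
  · exact Or.inl ⟨0, zero_mem _, fun a b _ => Subsingleton.elim a b⟩
  right
  push_neg at hreg
  have hfin := ass_finite (A := A) M
  have hsub : (maximalIdeal A : Set A) ⊆ ⋃ p ∈ hfin.toFinset, (p : Set A) := by
    intro x hx
    have hnr := hreg x hx
    obtain ⟨a, b, hab, hne⟩ := Function.not_injective_iff.mp hnr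
    have hm0 : a - b ≠ 0 := sub_ne_zero.mpr hne
    have hxm : x • (a - b) = 0 := by rw [smul_sub, hab, sub_self]
    obtain ⟨P, hP, hle⟩ := exists_le_isAssociatedPrime_of_isNoetherianRing A (a - b) hm0
    exact Set.mem_biUnion (hfin.mem_toFinset.mpr hP) (hle (colonMem.mpr hxm))
  have hprime : ∀ p ∈ hfin.toFinset, p ≠ (⊥ : Ideal A) → p ≠ (⊥ : Ideal A) →
      Ideal.IsPrime p := by
    intro p hp _ _
    exact (hfin.mem_toFinset.mp hp).isPrime
  obtain ⟨p, hps, hmp⟩ := (Ideal.subset_union_prime (f := id) ⊥ ⊥ hprime).mp hsub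
  obtain ⟨hpp, m, hm⟩ := isAssociatedPrime_iff.mp (hfin.mem_toFinset.mp hps)
  have hpm : p = maximalIdeal A :=
    le_antisymm (le_maximalIdeal hpp.ne_top) hmp
  have hm0 : m ≠ 0 := by
    rintro rfl
    apply hpp.ne_top
    rw [hm, Ideal.eq_top_iff_one, colonMem, smul_zero]
  refine ⟨m, hm0, fun r hr => ?_⟩
  exact colonMem.mp (hm ▸ hpm ▸ hr : r ∈ (⊥ : Submodule A M).colon {m})

end AuxB

section AuxC
variable {A : Type u} [CommRing A] [IsLocalRing A] [IsNoetherianRing A]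

/-- Depth-zero witness: a nonzero element annihilated by the maximal ideal. -/
def Tors (A : Type u) [CommRing A] [IsLocalRing A] (M : Type u) [AddCommGroup M]
    [Module A M] : Prop :=
  ∃ m : M, m ≠ 0 ∧ ∀ r ∈ maximalIdeal A, r • m = 0

/-- `Dge A M k`: there is a weakly regular sequence of length `k` on `M`
inside the maximal ideal. -/
def Dge (A : Type u) [CommRing A] [IsLocalRing A] (M : Type u) [AddCommGroup M]
    [Module A M] (k : ℕ) : Prop :=
  ∃ ws : List A, ws.length = k ∧ (∀ r ∈ ws, r ∈ maximalIdeal A) ∧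
    IsWeaklyRegular M ws

variable {M N : Type u} [AddCommGroup M] [Module A M] [AddCommGroup N] [Module A N]

lemma not_tors_of_reg {x : A} (hx : x ∈ maximalIdeal A) (hreg : IsSMulRegular M x) :
    ¬ Tors A M := by
  rintro ⟨m, h0, hall⟩
  exact h0 (hreg (show x • m = x • 0 by rw [hall x hx, smul_zero]))

lemma exists_reg_of_not_tors [Module.Finite A M] (h : ¬ Tors A M) :
    ∃ x ∈ maximalIdeal A, IsSMulRegular M x :=
  (exists_reg_or_tors M).resolve_right h

lemma reg_fst {x : A} (h : IsSMulRegular (M × N) x) : IsSMulRegular M x := by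
  intro a b hab
  have hab' : x • a = x • b := hab
  have : x • ((a, 0) : M × N) = x • ((b, 0) : M × N) := by
    rw [Prod.smul_mk, Prod.smul_mk, hab']
  exact congrArg Prod.fst (h this)

lemma reg_snd {x : A} (h : IsSMulRegular (M × N) x) : IsSMulRegular N x := by
  intro a b hab
  have hab' : x • a = x • b := hab
  have : x • ((0, a) : M × N) = x • ((0, b) : M × N) := by
    rw [Prod.smul_mk, Prod.smul_mk, hab']
  exact congrArg Prod.snd (h this)

lemma not_tors_prod (hM : ¬ Tors A M) (hN : ¬ Tors A N) : ¬ Tors A (M × N) := by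
  rintro ⟨⟨m, n⟩, h0, hall⟩
  by_cases hm : m = 0
  · subst hm
    refine hN ⟨n, fun h => h0 (by rw [h]; rfl), fun r hr => ?_⟩
    have := hall r hr
    rw [Prod.smul_mk] at this
    exact congrArg Prod.snd this
  · refine hM ⟨m, hm, fun r hr => ?_⟩
    have := hall r hr
    rw [Prod.smul_mk] at this
    exact congrArg Prod.fst this

lemma exists_common_reg [Module.Finite A M] [Module.Finite A N]
    (hM : ¬ Tors A M) (hN : ¬ Tors A N) :
    ∃ x ∈ maximalIdeal A, IsSMulRegular M x ∧ IsSMulRegular N x := by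
  obtain ⟨x, hx, hreg⟩ := exists_reg_of_not_tors (not_tors_prod hM hN)
  exact ⟨x, hx, reg_fst hreg, reg_snd hreg⟩

namespace Dge

lemma congr {k : ℕ} (e : M ≃ₗ[A] N) (h : Dge A M k) : Dge A N k := by
  obtain ⟨ws, h1, h2, h3⟩ := h
  exact ⟨ws, h1, h2, (e.isWeaklyRegular_congr ws).mp h3⟩

lemma of_le {k j : ℕ} (h : Dge A M k) (hj : j ≤ k) : Dge A M j := by
  obtain ⟨ws, h1, h2, h3⟩ := h
  refine ⟨ws.take j, by rw [List.length_take, h1]; omega,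
    fun r hr => h2 r (List.take_subset j ws hr), ?_⟩
  have := (isWeaklyRegular_append_iff M (ws.take j) (ws.drop j)).mp
    (by rw [List.take_append_drop]; exact h3)
  exact this.1

lemma head_reg {k : ℕ} (h : Dge A M (k + 1)) :
    ∃ x ∈ maximalIdeal A, IsSMulRegular M x := by
  obtain ⟨ws, h1, h2, h3⟩ := h
  cases ws with
  | nil => simp at h1
  | cons w ws' =>
    exact ⟨w, h2 w List.mem_cons_self,
      ((isWeaklyRegular_cons_iff M w ws').mp h3).1⟩

lemma not_tors {k : ℕ} (h : Dge A M (k + 1)) : ¬ Tors A M := by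
  obtain ⟨x, hx, hreg⟩ := h.head_reg
  exact not_tors_of_reg hx hreg

lemma cons {k : ℕ} {x : A} (hx : x ∈ maximalIdeal A) (hreg : IsSMulRegular M x)
    (h : Dge A (QuotSMulTop x M) k) : Dge A M (k + 1) := by
  obtain ⟨ws, h1, h2, h3⟩ := h
  refine ⟨x :: ws, by simp [h1], ?_, (isWeaklyRegular_cons_iff M x ws).mpr ⟨hreg, h3⟩⟩
  intro r hr
  rcases List.mem_cons.mp hr with rfl | hr
  · exact hx
  · exact h2 r hr

end Dge

lemma not_tors_quotSMulTop [Module.Finite A M] (h2 : Dge A M 2) {x : A}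
    (hx : IsSMulRegular M x) : ¬ Tors A (QuotSMulTop x M) := by
  rintro ⟨mq, hm0, hall⟩
  obtain ⟨ws, hlen, hmem, hwr⟩ := h2
  match ws, hlen with
  | [y₁, y₂], _ =>
  obtain ⟨hy₁, hrest⟩ := (isWeaklyRegular_cons_iff M y₁ [y₂]).mp hwr
  obtain ⟨hy₂, -⟩ := (isWeaklyRegular_cons_iff (QuotSMulTop y₁ M) y₂ []).mp hrest
  obtain ⟨m, rfl⟩ := Submodule.Quotient.mk_surjective _ mq
  have hmN : m ∉ (x • ⊤ : Submodule A M) :=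
    fun h => hm0 ((Submodule.Quotient.mk_eq_zero _).mpr h)
  have hsm : ∀ r ∈ maximalIdeal A, r • m ∈ (x • ⊤ : Submodule A M) := by
    intro r hr
    refine (Submodule.Quotient.mk_eq_zero _).mp ?_
    rw [Submodule.Quotient.mk_smul]
    exact hall r hr
  obtain ⟨m₁, hm₁⟩ := (memSmulTop x (y₁ • m)).mp (hsm y₁ (hmem y₁ (by simp)))
  obtain ⟨m₂, hm₂⟩ := (memSmulTop x (y₂ • m)).mp (hsm y₂ (hmem y₂ (by simp)))
  have h12 : y₂ • m₁ = y₁ • m₂ := by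
    apply hx
    show x • (y₂ • m₁) = x • (y₁ • m₂)
    rw [smul_comm x y₂, hm₁, smul_comm x y₁, hm₂, smul_comm]
  have hq1 : (Submodule.Quotient.mk m₁ : QuotSMulTop y₁ M) = 0 := by
    apply hy₂
    show y₂ • (Submodule.Quotient.mk m₁ : QuotSMulTop y₁ M) = y₂ • 0
    rw [smul_zero, ← Submodule.Quotient.mk_smul, h12]
    exact (Submodule.Quotient.mk_eq_zero _).mpr ((memSmulTop _ _).mpr ⟨m₂, rfl⟩)
  obtain ⟨m₃, hm₃⟩ := (memSmulTop y₁ m₁).mp ((Submodule.Quotient.mk_eq_zero _).mp hq1)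
  apply hmN
  refine (memSmulTop x m).mpr ⟨m₃, hy₁ (show y₁ • (x • m₃) = y₁ • m from ?_)⟩
  rw [smul_comm y₁ x, hm₃, hm₁]

end AuxC

section AuxD
variable {A : Type u} [CommRing A] [IsLocalRing A] [IsNoetherianRing A]

lemma wr_swap {M : Type u} [AddCommGroup M] [Module A M] [Module.Finite A M]
    {a b : A} {l : List A} (h : IsWeaklyRegular M (a :: b :: l))
    (hmem : ∀ r ∈ a :: b :: l, r ∈ maximalIdeal A) :
    IsWeaklyRegular M (b :: a :: l) := by
  haveI : IsNoetherian A M := isNoetherian_of_isNoetherianRing_of_finite A M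
  exact IsLocalRing.isWeaklyRegular_of_perm_of_subset_maximalIdeal h
    (List.Perm.swap b a l) hmem

lemma exchange : ∀ (k : ℕ) (M : Type u) [AddCommGroup M] [Module A M]
    [Module.Finite A M] {x : A}, x ∈ maximalIdeal A → IsSMulRegular M x →
    Dge A M (k + 1) →
    ∃ zs : List A, zs.length = k ∧ (∀ r ∈ zs, r ∈ maximalIdeal A) ∧
      IsWeaklyRegular M (x :: zs) := by
  intro k
  induction k with
  | zero =>
    intro M _ _ _ x hx hreg _
    exact ⟨[], rfl, by simp,
      (isWeaklyRegular_cons_iff M x []).mpr ⟨hreg, IsWeaklyRegular.nil A _⟩⟩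
  | succ k IH =>
    intro M _ _ _ x hx hreg hD
    obtain ⟨ws, hlen, hmem, hwr⟩ := hD
    cases ws with
    | nil => simp at hlen
    | cons y₁ ys =>
      have hy₁m : y₁ ∈ maximalIdeal A := hmem _ List.mem_cons_self
      have hysm : ∀ r ∈ ys, r ∈ maximalIdeal A := fun r hr => hmem r (List.mem_cons_of_mem _ hr)
      obtain ⟨hy₁, hys⟩ := (isWeaklyRegular_cons_iff M y₁ ys).mp hwr
      have hlys : ys.length = k + 1 := by simpa using hlen
      have hDq : Dge A (QuotSMulTop y₁ M) (k + 1) := ⟨ys, hlys, hysm, hys⟩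
      have hnt1 : ¬ Tors A (QuotSMulTop x M) :=
        not_tors_quotSMulTop (Dge.of_le (A := A) (M := M) (k := k+2)
          ⟨y₁ :: ys, hlen, hmem, hwr⟩ (by omega)) hreg
      have hnt2 : ¬ Tors A (QuotSMulTop y₁ M) := hDq.not_tors
      obtain ⟨z, hz, hz1, hz2⟩ := exists_common_reg hnt1 hnt2
      obtain ⟨ws₁, hl1, hm1, hw1⟩ := IH (QuotSMulTop y₁ M) hz hz2 hDq
      have hA : IsWeaklyRegular M (y₁ :: z :: ws₁) :=
        (isWeaklyRegular_cons_iff M y₁ (z :: ws₁)).mpr ⟨hy₁, hw1⟩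
      have hmemA : ∀ r ∈ y₁ :: z :: ws₁, r ∈ maximalIdeal A := by
        intro r hr
        rcases List.mem_cons.mp hr with rfl | hr
        · exact hy₁m
        rcases List.mem_cons.mp hr with rfl | hr
        · exact hz
        · exact hm1 r hr
      have hB := wr_swap hA hmemA
      obtain ⟨hzM, hw2⟩ := (isWeaklyRegular_cons_iff M z (y₁ :: ws₁)).mp hB
      -- x is regular on QuotSMulTop z M
      have hxz : IsWeaklyRegular M [x, z] :=
        (isWeaklyRegular_cons_iff M x [z]).mpr ⟨hreg,
          (isWeaklyRegular_cons_iff _ z []).mpr ⟨hz1, IsWeaklyRegular.nil A _⟩⟩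
      have hzx := wr_swap hxz (by
        intro r hr
        rcases List.mem_cons.mp hr with rfl | hr
        · exact hx
        rcases List.mem_cons.mp hr with rfl | hr
        · exact hz
        · simp at hr)
      have hxQz : IsSMulRegular (QuotSMulTop z M) x :=
        (((isWeaklyRegular_cons_iff M z [x]).mp hzx).2 |>
          fun h => ((isWeaklyRegular_cons_iff _ x []).mp h).1)
      obtain ⟨vs, hlv, hmv, hwv⟩ := IH (QuotSMulTop z M) hx hxQz
        ⟨y₁ :: ws₁, by simp [hl1], by
          intro r hr
          rcases List.mem_cons.mp hr with rfl | hr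
          · exact hy₁m
          · exact hm1 r hr, hw2⟩
      have hC : IsWeaklyRegular M (z :: x :: vs) :=
        (isWeaklyRegular_cons_iff M z (x :: vs)).mpr ⟨hzM, hwv⟩
      have hD2 := wr_swap hC (by
        intro r hr
        rcases List.mem_cons.mp hr with rfl | hr
        · exact hz
        rcases List.mem_cons.mp hr with rfl | hr
        · exact hx
        · exact hmv r hr)
      refine ⟨z :: vs, by simp [hlv], ?_, hD2⟩
      intro r hr
      rcases List.mem_cons.mp hr with rfl | hr
      · exact hz
      · exact hmv r hr

lemma Dge.quotSMulTop {M : Type u} [AddCommGroup M] [Module A M] [Module.Finite A M]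
    {k : ℕ} {x : A} (hx : x ∈ maximalIdeal A) (hreg : IsSMulRegular M x)
    (h : Dge A M (k + 1)) : Dge A (QuotSMulTop x M) k := by
  obtain ⟨zs, hl, hm, hw⟩ := exchange k M hx hreg h
  exact ⟨zs, hl, hm, ((isWeaklyRegular_cons_iff M x zs).mp hw).2⟩

end AuxD

section AuxE
variable {A : Type u} [CommRing A] [IsLocalRing A] [IsNoetherianRing A]

open LinearMap Function

lemma core {P Q : Type u} [AddCommGroup P] [Module A P] [AddCommGroup Q] [Module A Q]
    (g : P →ₗ[A] Q) (hg : Surjective g) {x y : A}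
    (hx : x ∈ maximalIdeal A) (hy : y ∈ maximalIdeal A)
    (hxP : IsSMulRegular P x)
    (hyreg : IsSMulRegular (QuotSMulTop x ↥(ker g)) y) : ¬ Tors A Q := by
  rintro ⟨q, hq0, hall⟩
  obtain ⟨p, rfl⟩ := hg q
  have hker : ∀ r ∈ maximalIdeal A, r • p ∈ ker g := by
    intro r hr
    rw [mem_ker, map_smul, hall r hr]
  set n₁ : ↥(ker g) := ⟨x • p, hker x hx⟩
  set n₂ : ↥(ker g) := ⟨y • p, hker y hy⟩
  have hsw : y • n₁ = x • n₂ := by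
    apply Subtype.ext
    show y • (x • p) = x • (y • p)
    rw [smul_comm]
  have hq1 : (Submodule.Quotient.mk n₁ : QuotSMulTop x ↥(ker g)) = 0 := by
    apply hyreg
    show y • (Submodule.Quotient.mk n₁ : QuotSMulTop x ↥(ker g)) = y • 0
    rw [smul_zero, ← Submodule.Quotient.mk_smul, hsw]
    exact (Submodule.Quotient.mk_eq_zero _).mpr ((memSmulTop _ _).mpr ⟨n₂, rfl⟩)
  obtain ⟨n₃, hn₃⟩ := (memSmulTop x n₁).mp ((Submodule.Quotient.mk_eq_zero _).mp hq1)
  have hpn : (n₃ : P) = p := hxP (show x • (n₃ : P) = x • p from congrArg Subtype.val hn₃)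
  apply hq0
  rw [← hpn]
  exact n₃.2

lemma dl : ∀ (k : ℕ) {P Q : Type u} [AddCommGroup P] [Module A P] [AddCommGroup Q]
    [Module A Q] [Module.Finite A P] [Module.Finite A Q] (g : P →ₗ[A] Q),
    Surjective g → Dge A ↥(ker g) (k + 1) → Dge A P (k + 1) → Dge A Q k := by
  intro k
  induction k with
  | zero =>
    intro P Q _ _ _ _ _ _ g hg hDK hDP
    exact ⟨[], rfl, by simp, IsWeaklyRegular.nil A Q⟩
  | succ k IH =>
    intro P Q _ _ _ _ _ _ g hg hDK hDP
    haveI : IsNoetherian A P := isNoetherian_of_isNoetherianRing_of_finite A P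
    haveI : Module.Finite A ↥(ker g) := inferInstance
    have hntQ : ¬ Tors A Q := by
      obtain ⟨x₀, hx₀, hx₀P, hx₀K⟩ := exists_common_reg hDP.not_tors hDK.not_tors
      obtain ⟨y₀, hy₀, hy₀r⟩ := exists_reg_of_not_tors
        (not_tors_quotSMulTop (hDK.of_le (by omega)) hx₀K)
      exact core g hg hx₀ hy₀ hx₀P hy₀r
    obtain ⟨x, hx, hxP, hxKQ⟩ := exists_common_reg hDP.not_tors
      (not_tors_prod hDK.not_tors hntQ)
    have hxK : IsSMulRegular ↥(ker g) x := reg_fst hxKQ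
    have hxQ : IsSMulRegular Q x := reg_snd hxKQ
    set γ : QuotSMulTop x ↥(ker g) →ₗ[A] QuotSMulTop x P :=
      QuotSMulTop.map x (ker g).subtype with hγ
    have hγinj : Injective γ := by
      rw [← LinearMap.ker_eq_bot, LinearMap.ker_eq_bot']
      intro c hc
      obtain ⟨n, rfl⟩ := Submodule.Quotient.mk_surjective _ c
      have hc' : (Submodule.Quotient.mk ((ker g).subtype n) : QuotSMulTop x P) = 0 := by
        rw [← QuotSMulTop.map_apply_mk]
        exact hc
      obtain ⟨p, hp⟩ := (memSmulTop x _).mp ((Submodule.Quotient.mk_eq_zero _).mp hc')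
      have hgp : g p = 0 := by
        apply hxQ
        show x • g p = x • 0
        rw [smul_zero, ← map_smul, hp]
        exact n.2
      have : n = x • (⟨p, hgp⟩ : ↥(ker g)) := by
        apply Subtype.ext
        exact hp.symm
      rw [this]
      exact (Submodule.Quotient.mk_eq_zero _).mpr ((memSmulTop _ _).mpr ⟨_, rfl⟩)
    have hexact : Function.Exact (ker g).subtype g := LinearMap.exact_subtype_ker_map g
    have hex2 := QuotSMulTop.map_exact x hexact hg
    have hrange : range γ = ker (QuotSMulTop.map x g) :=
      (LinearMap.exact_iff.mp hex2).symm
    have e : QuotSMulTop x ↥(ker g) ≃ₗ[A] ↥(ker (QuotSMulTop.map x g)) :=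
      (LinearEquiv.ofInjective γ hγinj).trans (LinearEquiv.ofEq _ _ hrange)
    have hDK' : Dge A ↥(ker (QuotSMulTop.map x g)) (k + 1) :=
      (Dge.quotSMulTop hx hxK hDK).congr e
    have hDP' : Dge A (QuotSMulTop x P) (k + 1) := Dge.quotSMulTop hx hxP hDP
    have hsurj' := QuotSMulTop.map_surjective x hg
    have hQ' : Dge A (QuotSMulTop x Q) k := IH (QuotSMulTop.map x g) hsurj' hDK' hDP'
    exact hQ'.cons hx hxQ

end AuxE

section AuxF
variable {A : Type u} [CommRing A] [IsLocalRing A] [IsNoetherianRing A]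

open LinearMap Function

lemma wreg_of_flat (M : Type u) [AddCommGroup M] [Module A M] [Module.Flat A M]
    {ws : List A} (h : IsWeaklyRegular A ws) : IsWeaklyRegular M ws := by
  have h1 : IsWeaklyRegular (M ⊗[A] A) ws := h.isWeaklyRegular_lTensor
  exact ((TensorProduct.rid A M).isWeaklyRegular_congr ws).mp h1

lemma ab {rs : List A} (hmem : ∀ r ∈ rs, r ∈ maximalIdeal A)
    (hw : IsWeaklyRegular A rs) :
    ∀ (n : ℕ) (M : Type u) [AddCommGroup M] [Module A M] [Module.Finite A M],
      PdLE A n M → ∀ k : ℕ, n + k ≤ rs.length → Dge A M k := by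
  intro n
  induction n with
  | zero =>
    intro M _ _ _ hproj k hk
    haveI : Module.Projective A M := hproj
    refine ⟨rs.take k, by rw [List.length_take]; omega,
      fun r hr => hmem r (List.take_subset k rs hr), ?_⟩
    refine wreg_of_flat M ?_
    exact ((isWeaklyRegular_append_iff A (rs.take k) (rs.drop k)).mp
      (by rw [List.take_append_drop]; exact hw)).1
  | succ n IH =>
    intro M _ _ _ hpd k hk
    obtain ⟨m, φ, hsurj, hker⟩ := hpd
    haveI : IsNoetherian A (Fin m → A) :=
      isNoetherian_of_isNoetherianRing_of_finite A _
    haveI : Module.Finite A ↥(ker φ) := inferInstance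
    have hDK : Dge A ↥(ker φ) (k + 1) := IH ↥(ker φ) hker (k + 1) (by omega)
    have hDF : Dge A (Fin m → A) (k + 1) :=
      ⟨rs.take (k + 1), by rw [List.length_take]; omega,
        fun r hr => hmem r (List.take_subset _ rs hr),
        wreg_of_flat _ ((isWeaklyRegular_append_iff A (rs.take (k+1)) (rs.drop (k+1))).mp
          (by rw [List.take_append_drop]; exact hw)).1⟩
    exact dl k φ hsurj hDK hDF

end AuxF

section AuxG
variable {A : Type u} [CommRing A]

open LinearMap Function

lemma pdle_congr : ∀ (n : ℕ) {M N : Type u} [AddCommGroup M] [Module A M]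
    [AddCommGroup N] [Module A N], PdLE A n M → (M ≃ₗ[A] N) → PdLE A n N := by
  intro n
  induction n with
  | zero =>
    intro M N _ _ _ _ h e
    haveI : Module.Projective A M := h
    exact Module.Projective.of_equiv e
  | succ n IH =>
    intro M N _ _ _ _ h e
    obtain ⟨m, φ, hsurj, hker⟩ := h
    refine ⟨m, e.toLinearMap.comp φ, e.surjective.comp hsurj, ?_⟩
    have hkk : ker (e.toLinearMap.comp φ) = ker φ := by
      ext v
      simp [LinearMap.mem_ker]
    rw [hkk]
    exact hker

lemma pdle_middle : ∀ (n : ℕ) {N M P : Type u} [AddCommGroup N] [Module A N]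
    [AddCommGroup M] [Module A M] [AddCommGroup P] [Module A P]
    (f : N →ₗ[A] M) (g : M →ₗ[A] P), Injective f → Surjective g →
    ker g = range f → PdLE A n N → PdLE A n P → PdLE A n M := by
  intro n
  induction n with
  | zero =>
    intro N M P _ _ _ _ _ _ f g hf hg hfg hN hP
    haveI : Module.Projective A N := hN
    haveI : Module.Projective A P := hP
    obtain ⟨s, hs⟩ := Module.projective_lifting_property g LinearMap.id hg
    -- e : N × P ≃ M via (n, p) ↦ f n + s p
    have hbij : Bijective (f.coprod s) := by
      constructor
      · intro aa bb hab
        obtain ⟨a1, a2⟩ := aa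
        obtain ⟨b1, b2⟩ := bb
        have hab' : f a1 + s a2 = f b1 + s b2 := hab
        have h2 : a2 = b2 := by
          have := congrArg g hab'
          have hgf : ∀ z : N, g (f z) = 0 := by
            intro z
            have : f z ∈ ker g := hfg ▸ ⟨z, rfl⟩
            exact this
          have hgs : ∀ z : P, g (s z) = z := fun z => congrArg (fun h => h z) hs
          simpa [map_add, hgf, hgs] using this
        have h1 : f a1 = f b1 := by
          have := hab'
          rw [h2] at this
          exact add_right_cancel this
        exact Prod.ext (hf h1) h2
      · intro mm
        have hmem : mm - s (g mm) ∈ range f := by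
          rw [← hfg, mem_ker, map_sub]
          have hgs : g (s (g mm)) = g mm := congrArg (fun h => h (g mm)) hs
          rw [hgs, sub_self]
        obtain ⟨nn, hnn⟩ := hmem
        exact ⟨(nn, g mm), by simp [hnn]⟩
    exact Module.Projective.of_equiv (LinearEquiv.ofBijective (f.coprod s) hbij)
  | succ n IH =>
    intro N M P _ _ _ _ _ _ f g hf hg hfg hN hP
    obtain ⟨a, φN, hsN, hkN⟩ := hN
    obtain ⟨b, φP, hsP, hkP⟩ := hP
    obtain ⟨σ, hσ⟩ := Module.projective_lifting_property g φP hg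
    set φ : (Fin a → A) × (Fin b → A) →ₗ[A] M := (f.comp φN).coprod σ with hφdef
    have hgf : ∀ z : N, g (f z) = 0 := by
      intro z
      have : f z ∈ ker g := hfg ▸ ⟨z, rfl⟩
      exact this
    have hgσ : ∀ v, g (σ v) = φP v := fun v => congrArg (fun h => h v) hσ
    have hφsurj : Surjective φ := by
      intro mm
      obtain ⟨v, hv⟩ := hsP (g mm)
      have hmem : mm - σ v ∈ range f := by
        rw [← hfg, mem_ker, map_sub, hgσ, hv, sub_self]
      obtain ⟨nn, hnn⟩ := hmem
      obtain ⟨uu, huu⟩ := hsN nn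
      refine ⟨(uu, v), ?_⟩
      show f (φN uu) + σ v = mm
      rw [huu, hnn]
      abel
    -- SES on kernels: ker φN → ker φ → ker φP
    set α : ↥(ker φN) →ₗ[A] ↥(ker φ) :=
      LinearMap.codRestrict (ker φ) ((LinearMap.inl A _ _).comp (ker φN).subtype)
        (by
          rintro ⟨u, hu⟩
          show φ (u, 0) = 0
          show f (φN u) + σ 0 = 0
          rw [mem_ker.mp hu, map_zero, map_zero, add_zero]) with hα
    set β : ↥(ker φ) →ₗ[A] ↥(ker φP) :=
      LinearMap.codRestrict (ker φP) ((LinearMap.snd A _ _).comp (ker φ).subtype)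
        (by
          rintro ⟨⟨u, v⟩, huv⟩
          have h0 : f (φN u) + σ v = 0 := huv
          show φP v = 0
          have := congrArg g h0
          simpa [map_add, hgf, hgσ] using this) with hβ
    have hαinj : Injective α := by
      intro c d hcd
      apply Subtype.ext
      have h1 : ((α c : ↥(ker φ)) : (Fin a → A) × (Fin b → A))
          = ((α d : ↥(ker φ)) : (Fin a → A) × (Fin b → A)) := congrArg Subtype.val hcd
      exact congrArg Prod.fst h1
    have hβsurj : Surjective β := by
      rintro ⟨v, hv⟩
      have hσv : σ v ∈ range f := by
        rw [← hfg, mem_ker, hgσ]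
        exact hv
      obtain ⟨nn, hnn⟩ := hσv
      obtain ⟨uu, huu⟩ := hsN nn
      have hmem : ((-uu, v) : (Fin a → A) × (Fin b → A)) ∈ ker φ := by
        show f (φN (-uu)) + σ v = 0
        rw [map_neg, map_neg, huu, hnn]
        abel
      exact ⟨⟨(-uu, v), hmem⟩, rfl⟩
    have hker : ker β = range α := by
      ext ⟨⟨u, v⟩, huv⟩
      constructor
      · intro hb
        have hv0 : v = 0 := congrArg Subtype.val hb
        subst hv0
        have hphi : f (φN u) + σ 0 = 0 := huv
        have hu0 : φN u = 0 := by
          apply hf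
          rw [map_zero]
          rw [map_zero, add_zero] at hphi
          exact hphi
        exact ⟨⟨u, mem_ker.mpr hu0⟩, rfl⟩
      · rintro ⟨⟨u', hu'⟩, hc⟩
        apply Subtype.ext
        have : ((u', (0 : Fin b → A)) : _ × _) = (u, v) := congrArg Subtype.val hc
        show v = 0
        rw [← (Prod.mk.injEq .. |>.mp this).2]
    have hkφ : PdLE A n ↥(ker φ) := IH α β hαinj hβsurj hker hkN hkP
    -- transfer along (Fin (a+b) → A) ≃ (Fin a → A) × (Fin b → A)
    let e : (Fin (a + b) → A) ≃ₗ[A] (Fin a → A) × (Fin b → A) :=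
      (LinearEquiv.funCongrLeft A A finSumFinEquiv).trans
        (LinearEquiv.sumArrowLequivProdArrow (Fin a) (Fin b) A A)
    refine ⟨a + b, φ.comp e.toLinearMap, hφsurj.comp e.surjective, ?_⟩
    have hmapeq : (ker (φ.comp e.toLinearMap)).map e.toLinearMap = ker φ := by
      ext w
      constructor
      · rintro ⟨w', hw', rfl⟩
        simpa [LinearMap.mem_ker] using hw'
      · intro hw
        refine ⟨e.symm w, ?_, by simp⟩
        simpa [LinearMap.mem_ker] using hw
    exact pdle_congr n hkφ ((e.submoduleMap _).trans (LinearEquiv.ofEq _ _ hmapeq)).symm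

lemma pdle_quot : ∀ (n : ℕ) {N M P : Type u} [AddCommGroup N] [Module A N]
    [AddCommGroup M] [Module A M] [AddCommGroup P] [Module A P]
    (f : N →ₗ[A] M) (g : M →ₗ[A] P), Injective f → Surjective g →
    ker g = range f → PdLE A n N → PdLE A (n + 1) M → PdLE A (n + 1) P := by
  intro n N M P _ _ _ _ _ _ f g hf hg hfg hN hM
  obtain ⟨m, φ, hsurj, hK⟩ := hM
  refine ⟨m, g.comp φ, hg.comp hsurj, ?_⟩
  -- SES : ker φ → ker (g ∘ φ) → N
  have hle : ker φ ≤ ker (g.comp φ) := by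
    intro v hv
    rw [mem_ker] at hv ⊢
    rw [LinearMap.comp_apply, hv, map_zero]
  set α : ↥(ker φ) →ₗ[A] ↥(ker (g.comp φ)) := Submodule.inclusion hle with hα
  have hδmem : ∀ w : ↥(ker (g.comp φ)), φ (w : Fin m → A) ∈ range f := by
    rintro ⟨w, hw⟩
    rw [← hfg, mem_ker]
    exact hw
  set δ : ↥(ker (g.comp φ)) →ₗ[A] ↥(range f) :=
    LinearMap.codRestrict (range f) (φ.comp (ker (g.comp φ)).subtype) hδmem with hδ
  set β : ↥(ker (g.comp φ)) →ₗ[A] N :=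
    ((LinearEquiv.ofInjective f hf).symm.toLinearMap).comp δ with hβ
  have hβsurj : Surjective β := by
    intro nn
    obtain ⟨w, hw⟩ := hsurj (f nn)
    have hwk : w ∈ ker (g.comp φ) := by
      rw [mem_ker, LinearMap.comp_apply, hw]
      have : f nn ∈ ker g := hfg ▸ ⟨nn, rfl⟩
      exact this
    refine ⟨⟨w, hwk⟩, ?_⟩
    have hδw : δ ⟨w, hwk⟩ = (LinearEquiv.ofInjective f hf) nn := by
      apply Subtype.ext
      show φ w = f nn
      exact hw
    show (LinearEquiv.ofInjective f hf).symm (δ ⟨w, hwk⟩) = nn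
    rw [hδw, LinearEquiv.symm_apply_apply]
  have hkerβ : ker β = range α := by
    ext ⟨w, hw⟩
    constructor
    · intro hb
      have hδ0 : δ ⟨w, hw⟩ = 0 := by
        have : (LinearEquiv.ofInjective f hf).symm (δ ⟨w, hw⟩) = 0 := hb
        have h2 := congrArg (LinearEquiv.ofInjective f hf) this
        rwa [LinearEquiv.apply_symm_apply, map_zero] at h2
      have hφw : φ w = 0 := congrArg Subtype.val hδ0
      exact ⟨⟨w, mem_ker.mpr hφw⟩, rfl⟩
    · rintro ⟨⟨w', hw'⟩, hc⟩
      have hww : w' = w := congrArg Subtype.val hc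
      subst hww
      show β ⟨w', hw⟩ = 0
      have hδ0 : δ ⟨w', hw⟩ = 0 := by
        apply Subtype.ext
        show φ w' = 0
        exact mem_ker.mp hw'
      show (LinearEquiv.ofInjective f hf).symm (δ ⟨w', hw⟩) = 0
      rw [hδ0, map_zero]
  have hαinj : Injective α := Submodule.inclusion_injective hle
  exact pdle_middle n α β hαinj hβsurj hkerβ hK hN

end AuxG

variable {A : Type u} [CommRing A]

/-- Vanishing of the `i`-th cohomology of the complex `0 → Λ⁰ → Λ¹ → ⋯`. -/
def CohVanishes (Λ : ℕ → Type u) [∀ i, AddCommGroup (Λ i)] [∀ i, Module A (Λ i)]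
    (d : ∀ i, Λ i →ₗ[A] Λ (i + 1)) : ℕ → Prop
  | 0 => ∀ x : Λ 0, d 0 x = 0 → x = 0
  | (j + 1) => ∀ x : Λ (j + 1), d (j + 1) x = 0 → ∃ y : Λ j, d j y = x

/-- The `i`-th cohomology of the complex `0 → Λ⁰ → Λ¹ → ⋯` is nonzero of depth zero:
there is a nonzero cohomology class annihilated by the maximal ideal. -/
def CohDepthZero [IsLocalRing A] (Λ : ℕ → Type u) [∀ i, AddCommGroup (Λ i)]
    [∀ i, Module A (Λ i)] (d : ∀ i, Λ i →ₗ[A] Λ (i + 1)) : ℕ → Prop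
  | 0 => ∃ x : Λ 0, d 0 x = 0 ∧ x ≠ 0 ∧
      ∀ r ∈ IsLocalRing.maximalIdeal A, r • x = 0
  | (j + 1) => ∃ x : Λ (j + 1), d (j + 1) x = 0 ∧ (¬ ∃ y : Λ j, d j y = x) ∧
      ∀ r ∈ IsLocalRing.maximalIdeal A, ∃ y : Λ j, d j y = r • x

open LinearMap Function

/-- **Acyclicity Lemma of Peskine–Szpiro.**  Let `A` be a Noetherian
local ring and `0 → Λ⁰ → Λ¹ → ⋯ → Λᵗ` a complex of finitely generated `A`-modules
with `pd_A(Λⁱ) ≤ i`, such that each nonvanishing cohomology module `Hⁱ` with `i < t`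
has depth zero.  If `t ≤ depth A` (there is a regular sequence of length `t` in the
maximal ideal), then `Hⁱ = 0` for all `i < t`. -/
theorem stmt_14 [IsLocalRing A] [IsNoetherianRing A] (t : ℕ)
    (Λ : ℕ → Type u) [∀ i, AddCommGroup (Λ i)] [∀ i, Module A (Λ i)]
    (d : ∀ i, Λ i →ₗ[A] Λ (i + 1))
    (hcx : ∀ i, (d (i + 1)).comp (d i) = 0)
    (hbdd : ∀ i, t < i → Subsingleton (Λ i))
    (hfg : ∀ i, Module.Finite A (Λ i))
    (hpd : ∀ i, i ≤ t → PdLE A i (Λ i))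
    (hdz : ∀ i, i < t → CohVanishes (A := A) Λ d i ∨ CohDepthZero (A := A) Λ d i)
    (hdepth : ∃ rs : List A, rs.length = t ∧
      (∀ r ∈ rs, r ∈ IsLocalRing.maximalIdeal A) ∧
      RingTheory.Sequence.IsRegular A rs) :
    ∀ i, i < t → CohVanishes (A := A) Λ d i := by
  obtain ⟨rs, hlen, hmemrs, hregrs⟩ := hdepth
  have hwr : IsWeaklyRegular A rs := hregrs.toIsWeaklyRegular
  intro i
  induction i using Nat.strong_induction_on with
  | _ i IH =>
    intro hit
    -- projective dimension of the images
    have hR : ∀ j : ℕ, j < i → PdLE A j ↥(LinearMap.range (d j)) := by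
      intro j
      induction j with
      | zero =>
        intro hj
        have hv0 : CohVanishes (A := A) Λ d 0 := IH 0 hj (by omega)
        have hinj : Injective (d 0) := by
          intro a b hab
          have h0 : d 0 (a - b) = 0 := by rw [map_sub, hab, sub_self]
          exact sub_eq_zero.mp (hv0 _ h0)
        exact pdle_congr 0 (hpd 0 (by omega)) (LinearEquiv.ofInjective (d 0) hinj)
      | succ j IHj =>
        intro hj
        have hRj := IHj (by omega)
        have hv : CohVanishes (A := A) Λ d (j + 1) := IH (j + 1) hj (by omega)
        have hkr : ker (d (j + 1)) = LinearMap.range (d j) := by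
          ext v
          constructor
          · intro hv'
            obtain ⟨y, hy⟩ := hv v (mem_ker.mp hv')
            exact ⟨y, hy⟩
          · rintro ⟨y, rfl⟩
            rw [mem_ker]
            have h0 := congrArg (fun h => h y) (hcx j)
            simpa using h0
        refine pdle_quot j ((LinearMap.range (d j)).subtype) ((d (j + 1)).rangeRestrict)
          (Submodule.injective_subtype _) (surjective_rangeRestrict _) ?_ hRj
          (hpd (j + 1) (by omega))
        rw [ker_rangeRestrict, hkr, Submodule.range_subtype]
    rcases hdz i hit with hv | hdep
    · exact hv
    exfalso
    cases i with
    | zero =>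
      obtain ⟨z, hz1, hz0, hall⟩ := hdep
      haveI := hfg 0
      have hD1 : Dge A (Λ 0) 1 := ab hmemrs hwr 0 (Λ 0) (hpd 0 (by omega)) 1 (by omega)
      obtain ⟨x, hx, hxreg⟩ := hD1.head_reg
      exact hz0 (hxreg (show x • z = x • 0 by rw [hall x hx, smul_zero]))
    | succ j =>
      obtain ⟨z, hz1, hznotin, hall⟩ := hdep
      haveI := hfg (j + 1)
      haveI : IsNoetherian A (Λ (j + 1)) :=
        isNoetherian_of_isNoetherianRing_of_finite A (Λ (j + 1))
      haveI : Module.Finite A ↥(LinearMap.range (d j)) := inferInstance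
      have hNpd : PdLE A j ↥(LinearMap.range (d j)) := hR j (by omega)
      have hDN2 : Dge A ↥(LinearMap.range (d j)) 2 :=
        ab hmemrs hwr j _ hNpd 2 (by omega)
      have hDP1 : Dge A (Λ (j + 1)) 1 :=
        ab hmemrs hwr (j + 1) _ (hpd (j + 1) (by omega)) 1 (by omega)
      obtain ⟨x, hx, hxP, hxN⟩ := exists_common_reg hDP1.not_tors hDN2.not_tors
      obtain ⟨y, hy, hyreg⟩ := exists_reg_of_not_tors (not_tors_quotSMulTop hDN2 hxN)
      have hzmem : ∀ r ∈ IsLocalRing.maximalIdeal A, r • z ∈ LinearMap.range (d j) := by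
        intro r hr
        obtain ⟨w, hw⟩ := hall r hr
        exact ⟨w, hw⟩
      set n₁ : ↥(LinearMap.range (d j)) := ⟨x • z, hzmem x hx⟩ with hn₁def
      set n₂ : ↥(LinearMap.range (d j)) := ⟨y • z, hzmem y hy⟩ with hn₂def
      have hsw : y • n₁ = x • n₂ := by
        apply Subtype.ext
        show y • (x • z) = x • (y • z)
        rw [smul_comm]
      have hq1 : (Submodule.Quotient.mk n₁ :
          QuotSMulTop x ↥(LinearMap.range (d j))) = 0 := by
        apply hyreg
        show y • (Submodule.Quotient.mk n₁ :
          QuotSMulTop x ↥(LinearMap.range (d j))) = y • 0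
        rw [smul_zero, ← Submodule.Quotient.mk_smul, hsw]
        exact (Submodule.Quotient.mk_eq_zero _).mpr ((memSmulTop _ _).mpr ⟨n₂, rfl⟩)
      obtain ⟨n₃, hn₃⟩ := (memSmulTop x n₁).mp ((Submodule.Quotient.mk_eq_zero _).mp hq1)
      have hzn : (n₃ : Λ (j + 1)) = z :=
        hxP (show x • (n₃ : Λ (j + 1)) = x • z from congrArg Subtype.val hn₃)
      apply hznotin
      obtain ⟨w, hw⟩ := n₃.2
      exact ⟨w, by rw [hw, hzn]⟩
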